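/- For bases A, B of a matroid M on a linearly ordered set E, the following are equivalent: (1) A ⊆ B ∪ EA(B); (2) A ∪ EA(A) ⊆ B ∪ EA(B). (This common condition defines the external order A ≤_ext B on bases.) -/

import Mathlib

open Set

variable {α : Type*}

/-- A circuit of a matroid: a minimal dependent set. -/
def Matroid.Cct (M : Matroid α) (C : Set α) : Prop :=
  M.Dep C ∧ ∀ D ⊂ C, ¬ M.Dep D

/-- The externally active elements with respect to `S`: elements `e ∈ E \ S` that are the
maximum of some circuit contained in `S ∪ {e}`. -/
def Matroid.exA [LinearOrder α] (M : Matroid α) (S : Set α) : Set α :=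
  {e | e ∈ M.E \ S ∧ ∃ C, M.Cct C ∧ C ⊆ insert e S ∧ ∀ f ∈ C, f ≤ e}

/-- The externally passive elements with respect to `S`. -/
def Matroid.exP [LinearOrder α] (M : Matroid α) (S : Set α) : Set α :=
  (M.E \ S) \ M.exA S

/-- The internally active elements with respect to `S`: elements of `S` that are externally
active with respect to `E \ S` in the dual matroid. -/
def Matroid.inA [LinearOrder α] (M : Matroid α) (S : Set α) : Set α :=
  {i | i ∈ S ∧ i ∈ M✶.exA (M.E \ S)}

/-- The internally passive elements with respect to `S`. -/
def Matroid.inP [LinearOrder α] (M : Matroid α) (S : Set α) : Set α :=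
  S \ M.inA S

/-- `I` is internally related to the basis `B` if `I = B \ Y` for some `Y ⊆ IA(B)`. -/
def Matroid.IntRelated [LinearOrder α] (M : Matroid α) (I B : Set α) : Prop :=
  M.IsBase B ∧ ∃ Y ⊆ M.inA B, I = B \ Y

/-- The external/internal order on independent sets. -/
def Matroid.extIntLE [LinearOrder α] (M : Matroid α) (I J : Set α) : Prop :=
  ((∃ B, M.IntRelated I B ∧ M.IntRelated J B) ∧ I ⊆ J) ∨
  ((¬ ∃ B, M.IntRelated I B ∧ M.IntRelated J B) ∧
    (I \ M.inA I) ∪ M.exA I ⊆ (J \ M.inA J) ∪ M.exA J)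

lemma Matroid.Dep.exists_cct {M : Matroid α} [M.Finite] {D : Set α}
    (hD : M.Dep D) : ∃ C ⊆ D, M.Cct C := by
  have hDfin : D.Finite := M.ground_finite.subset hD.subset_ground
  have hfin : {D' : Set α | D' ⊆ D ∧ M.Dep D'}.Finite :=
    hDfin.finite_subsets.subset fun X hX => hX.1
  obtain ⟨C, ⟨hCD, hCdep⟩, hmin⟩ : ∃ C ∈ {D' : Set α | D' ⊆ D ∧ M.Dep D'},
      ∀ D' ∈ {D' : Set α | D' ⊆ D ∧ M.Dep D'}, D' ≤ C → C = D' := by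
    obtain ⟨C, hC⟩ := hfin.exists_minimal ⟨D, Subset.rfl, hD⟩
    exact ⟨C, hC.prop, fun D' hD' h => le_antisymm (hC.2 hD' h) h⟩
  refine ⟨C, hCD, hCdep, fun D' hD'C hD'dep => ?_⟩
  have := hmin D' ⟨hD'C.subset.trans hCD, hD'dep⟩ hD'C.subset
  exact hD'C.ne this.symm

lemma Matroid.mem_exA_iff [LinearOrder α] {M : Matroid α} [M.Finite] {S : Set α} {e : α}
    (hS : M.Indep S) :
    e ∈ M.exA S ↔ e ∈ M.E \ S ∧ e ∈ M.closure {f ∈ S | f < e} := by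
  constructor
  · rintro ⟨heS, C, hC, hCsub, hCle⟩
    refine ⟨heS, ?_⟩
    have heC : e ∈ C := by
      by_contra heC
      have hCS : C ⊆ S := fun x hx => ((hCsub hx).resolve_left (fun h => heC (h ▸ hx)))
      exact hC.1.not_indep (hS.subset hCS)
    have hC'sub : C \ {e} ⊆ {f ∈ S | f < e} := by
      rintro x ⟨hxC, hxe⟩
      have hxS : x ∈ S := (hCsub hxC).resolve_left hxe
      exact ⟨hxS, lt_of_le_of_ne (hCle x hxC) hxe⟩
    have hC'indep : M.Indep (C \ {e}) := by
      have hne : ¬ M.Dep (C \ {e}) := hC.2 _ (sdiff_singleton_ssubset.2 heC)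
      rwa [M.not_dep_iff ((diff_subset).trans hC.1.subset_ground)] at hne
    have hins : insert e (C \ {e}) = C := insert_diff_singleton.trans (insert_eq_of_mem heC)
    have hdep := hC.1
    rw [← hins, hC'indep.insert_dep_iff] at hdep
    exact (M.closure_subset_closure hC'sub) hdep.1
  · rintro ⟨heS, hecl⟩
    have hsub : {f ∈ S | f < e} ⊆ S := fun x hx => hx.1
    have hindep : M.Indep {f ∈ S | f < e} := hS.subset hsub
    have hdep : M.Dep (insert e {f ∈ S | f < e}) := by
      rw [hindep.insert_dep_iff]
      exact ⟨hecl, fun h => heS.2 h.1⟩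
    obtain ⟨C, hCsub, hC⟩ := hdep.exists_cct
    refine ⟨heS, C, hC, hCsub.trans (insert_subset_insert hsub), fun f hf => ?_⟩
    rcases hCsub hf with rfl | hf'
    · exact le_rfl
    · exact hf'.2.le

/-- The two equivalent conditions defining Las Vergnas's external order on bases. -/
theorem external_order_tfae [LinearOrder α] (M : Matroid α) [M.Finite]
    (A B : Set α) (hA : M.IsBase A) (hB : M.IsBase B) :
    A ⊆ B ∪ M.exA B ↔ A ∪ M.exA A ⊆ B ∪ M.exA B := by
  constructor
  · intro h
    refine union_subset h fun e he => ?_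
    rw [M.mem_exA_iff hA.indep] at he
    obtain ⟨heA, hecl⟩ := he
    have key : {f ∈ A | f < e} ⊆ M.closure {f ∈ B | f < e} := by
      rintro a ⟨haA, hae⟩
      rcases h haA with haB | haexA
      · exact M.subset_closure {f ∈ B | f < e} (fun x hx => hB.subset_ground hx.1) ⟨haB, hae⟩
      · rw [M.mem_exA_iff hB.indep] at haexA
        exact M.closure_subset_closure
          (show {f ∈ B | f < a} ⊆ {f ∈ B | f < e} from
            fun x hx => ⟨hx.1, hx.2.trans hae⟩) haexA.2
    have hecl' : e ∈ M.closure {f ∈ B | f < e} := by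
      have := (M.closure_subset_closure key).trans
        (M.closure_closure _).subset hecl
      exact this
    by_cases heB : e ∈ B
    · exact Or.inl heB
    · exact Or.inr ((M.mem_exA_iff hB.indep).2 ⟨⟨heA.1, heB⟩, hecl'⟩)
  · exact fun h x hx => h (Or.inl hx)
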